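/- Let F be the real quadratic field of discriminant Δ_F = 12 (i.e. F = ℚ(√3)) with real embeddings σ, σ', and let f ∈ F be the element with σ(f) = (1 + √3)/2 and σ'(f) = (1 − √3)/2. Then I = ℤ·1 + ℤ·f is a fractional ideal of F, I is 1-reduced, N(f − 1/2) = −3/4, and the absolute norm of I⁻¹ equals 2 = √(Δ_F/3). -/

import Mathlib

open NumberField
open scoped nonZeroDivisors


lemma sq_ge_one {m : ℤ} (hm : m ≠ 0) : 1 ≤ m^2 := by
  rcases hm.lt_or_gt with h|h <;> nlinarith

lemma int_bound (m n : ℤ) (h : ¬(m = 0 ∧ n = 0)) : 4 ≤ (2*m+n)^2 + 3*n^2 := by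
  rcases eq_or_ne n 0 with hn | hn
  · subst hn
    have hm : m ≠ 0 := by tauto
    have := sq_ge_one hm
    nlinarith
  · have h1 := sq_ge_one hn
    rcases eq_or_ne (2*m+n) 0 with hp | hp
    · have h2 : n = -2*m := by omega
      have hm : m ≠ 0 := by intro h0; rw [h0] at h2; simp at h2; exact hn h2
      have := sq_ge_one hm
      nlinarith
    · have := sq_ge_one hp
      nlinarith

lemma mod4_even (p q c : ℤ) (h : p^2 - 3*q^2 = 4*c) : 2 ∣ p ∧ 2 ∣ q := by
  have key : ∀ x y : ZMod 4, x^2 = 3*y^2 →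
      (ZMod.castHom (show (2:ℕ) ∣ 4 by norm_num) (ZMod 2) x = 0 ∧
       ZMod.castHom (show (2:ℕ) ∣ 4 by norm_num) (ZMod 2) y = 0) := by
    decide
  have h0 : (4 : ZMod 4) = 0 := by decide
  have h4 : (p : ZMod 4)^2 = 3 * (q : ZMod 4)^2 := by
    have := congrArg (Int.cast : ℤ → ZMod 4) h
    push_cast at this
    linear_combination this + (c : ZMod 4) * h0
  obtain ⟨hp, hq⟩ := key _ _ h4
  constructor
  · have : ((p : ZMod 2)) = 0 := by
      rw [← map_intCast (ZMod.castHom (show (2:ℕ) ∣ 4 by norm_num) (ZMod 2)) p]; exact hp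
    exact (ZMod.intCast_zmod_eq_zero_iff_dvd p 2).mp this
  · have : ((q : ZMod 2)) = 0 := by
      rw [← map_intCast (ZMod.castHom (show (2:ℕ) ∣ 4 by norm_num) (ZMod 2)) q]; exact hq
    exact (ZMod.intCast_zmod_eq_zero_iff_dvd q 2).mp this

lemma rat_is_int {q : ℚ} (h : IsIntegral ℤ q) : ∃ m : ℤ, (m : ℚ) = q :=
  IsIntegrallyClosed.isIntegral_iff.mp h

lemma rat_sq_int {q : ℚ} {N : ℤ} (h : q^2 = N) : ∃ m : ℤ, (m : ℚ) = q := by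
  apply rat_is_int
  refine ⟨Polynomial.X^2 - Polynomial.C (N : ℤ), Polynomial.monic_X_pow_sub_C _ (by norm_num), ?_⟩
  have h2 : Polynomial.eval₂ (algebraMap ℤ ℚ) q (Polynomial.X^2 - Polynomial.C (N:ℤ)) = q^2 - (N:ℚ) := by
    rw [← Polynomial.aeval_def]
    simp [map_intCast]
  show Polynomial.eval₂ _ _ _ = 0
  rw [h2, h, sub_self]

lemma rat_halves {a b : ℚ} {p c : ℤ} (hp : (p:ℚ) = 2*a) (hc : (c:ℚ) = a^2 - 3*b^2) :
    (∃ m : ℤ, (m:ℚ) = a) ∧ (∃ n : ℤ, (n:ℚ) = b) := by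
  have h36 : ((3*(p^2 - 4*c) : ℤ) : ℚ) = (6*b)^2 := by
    push_cast
    linear_combination (3*(p:ℚ)+6*a)*hp - 12*hc
  obtain ⟨k, hk⟩ := rat_sq_int h36.symm
  have hk2 : k^2 = 3*(p^2-4*c) := by
    have h2 : ((k^2 : ℤ):ℚ) = ((3*(p^2-4*c) : ℤ):ℚ) := by
      push_cast
      push_cast at h36
      rw [hk]
      linarith
    exact_mod_cast h2
  have h3k : (3:ℤ) ∣ k := by
    have hpr : Prime (3:ℤ) := Int.prime_three
    exact hpr.dvd_of_dvd_pow (n := 2) ⟨p^2-4*c, hk2⟩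
  obtain ⟨q', hq'⟩ := h3k
  have hq'b : (q' : ℚ) = 2*b := by
    have h3 : (3:ℚ) * q' = 6 * b := by
      rw [← hk, hq']; push_cast; ring
    linarith
  have hpq : p^2 - 3*q'^2 = 4*c := by
    have h2 : ((p^2-3*q'^2 : ℤ):ℚ) = ((4*c : ℤ):ℚ) := by
      push_cast
      linear_combination ((p:ℚ)+2*a)*hp - 3*((q':ℚ)+2*b)*hq'b - 4*hc
    exact_mod_cast h2
  obtain ⟨⟨a', ha'⟩, ⟨b', hb'⟩⟩ := mod4_even p q' c hpq
  constructor
  · refine ⟨a', ?_⟩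
    have h1 : ((p:ℚ)) = 2*a' := by rw [ha']; push_cast; ring
    rw [hp] at h1; linarith
  · refine ⟨b', ?_⟩
    have h1 : ((q':ℚ)) = 2*b' := by rw [hb']; push_cast; ring
    rw [hq'b] at h1; linarith

open Polynomial

lemma quad_int_coeffs {F : Type*} [Field F] [NumberField F] {s : F}
    (hs2 : s^2 = 3) (hsQ : ∀ q : ℚ, (q:F) ≠ s) {a b : ℚ}
    (hint : IsIntegral ℤ ((a:F) + (b:F) * s)) :
    (∃ m : ℤ, (m:ℚ) = a) ∧ (∃ n : ℤ, (n:ℚ) = b) := by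
  rcases eq_or_ne b 0 with hb | hb
  · subst hb
    have h0 : ((a:F) + (0:ℚ) * s) = algebraMap ℚ F a := by
      rw [eq_ratCast (algebraMap ℚ F) a]; push_cast; ring
    rw [h0] at hint
    have ha : IsIntegral ℤ a := IsIntegral.tower_bot (algebraMap ℚ F).injective hint
    exact ⟨IsIntegrallyClosed.isIntegral_iff.mp ha, ⟨0, by norm_num⟩⟩
  · set x : F := (a:F) + (b:F) * s with hx
    have hxQ : x ∉ Set.range (algebraMap ℚ F) := by
      rintro ⟨q, hq⟩
      apply hsQ ((q - a)/b)
      rw [eq_ratCast (algebraMap ℚ F) q] at hq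
      push_cast
      rw [hq, hx]
      field_simp
      ring
    set P : ℚ[X] := X^2 - C (2*a) * X + C (a^2 - 3*b^2) with hP
    have hmonic : P.Monic := by rw [hP]; monicity!
    have hdegP : P.degree = 2 := by rw [hP]; compute_degree!
    have hroot : Polynomial.aeval x P = 0 := by
      rw [hP]
      simp only [map_add, map_sub, map_mul, map_pow, aeval_X, aeval_C, eq_ratCast]
      push_cast
      rw [hx]
      linear_combination (b:F)^2 * hs2
    have hxint : IsIntegral ℚ x := ⟨P, hmonic, hroot⟩
    have h2le : 2 ≤ (minpoly ℚ x).natDegree := by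
      rw [minpoly.two_le_natDegree_iff hxint]
      exact hxQ
    have hPmin : P = minpoly ℚ x := by
      apply minpoly.unique _ _ hmonic hroot
      intro q qm hq
      calc P.degree = 2 := hdegP
        _ ≤ (minpoly ℚ x).degree := by
            rw [degree_eq_natDegree (minpoly.ne_zero hxint)]
            exact_mod_cast h2le
        _ ≤ q.degree := minpoly.min _ _ qm hq
    have hmap : minpoly ℚ x = (minpoly ℤ x).map (algebraMap ℤ ℚ) :=
      minpoly.isIntegrallyClosed_eq_field_fractions' ℚ hint
    have hc1 : P.coeff 1 = -(2*a) := by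
      rw [hP]
      simp only [coeff_add, coeff_sub, coeff_C_mul, coeff_X_pow, coeff_C, coeff_X_one, coeff_X_zero]
      norm_num
    have hc0 : P.coeff 0 = a^2 - 3*b^2 := by
      rw [hP]
      simp only [coeff_add, coeff_sub, coeff_C_mul, coeff_X_pow, coeff_C, coeff_X_one, coeff_X_zero]
      norm_num
    have hp : ((-(minpoly ℤ x).coeff 1 : ℤ) : ℚ) = 2*a := by
      have := hc1
      rw [hPmin, hmap, coeff_map] at this
      push_cast
      rw [eq_intCast (algebraMap ℤ ℚ)] at this
      linarith [this]
    have hcc : (((minpoly ℤ x).coeff 0 : ℤ) : ℚ) = a^2 - 3*b^2 := by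
      have := hc0
      rw [hPmin, hmap, coeff_map] at this
      rw [eq_intCast (algebraMap ℤ ℚ)] at this
      exact this
    exact rat_halves hp hcc

/-- The `u`-length of an element `g` of a real quadratic field with real embeddings `σ, σ'`:
`‖g‖_u = √(u₁²·σ(g)² + u₂²·σ'(g)²)`. -/
noncomputable def normU {F : Type*} [Field F] (σ σ' : F →+* ℝ) (u₁ u₂ : ℝ) (g : F) : ℝ :=
  Real.sqrt (u₁ ^ 2 * (σ g) ^ 2 + u₂ ^ 2 * (σ' g) ^ 2)

/-- A fractional ideal `I` is reduced if `1 ∈ I` and the only `g ∈ I` with `|σ g| < 1` and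
`|σ' g| < 1` is `g = 0`. -/
def IsReducedIdeal {F : Type*} [Field F] [NumberField F] (σ σ' : F →+* ℝ)
    (I : FractionalIdeal (𝓞 F)⁰ F) : Prop :=
  (1 : F) ∈ I ∧ ∀ g ∈ I, |σ g| < 1 → |σ' g| < 1 → g = 0

/-- `1` is primitive in `I`: `1 ∈ I` and no `1/d ∈ I` for an integer `d ≥ 2`. -/
def IsOnePrimitive {F : Type*} [Field F] [NumberField F]
    (I : FractionalIdeal (𝓞 F)⁰ F) : Prop :=
  (1 : F) ∈ I ∧ ∀ d : ℕ, 2 ≤ d → ((d : F))⁻¹ ∉ I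

/-- `I` is 1-reduced: `1` is primitive in `I` and for some metric `u = (u₁, u₂)` of positive
reals, `1` is a shortest nonzero vector of `I` with respect to `‖·‖_u`. -/
def IsOneReduced {F : Type*} [Field F] [NumberField F] (σ σ' : F →+* ℝ)
    (I : FractionalIdeal (𝓞 F)⁰ F) : Prop :=
  IsOnePrimitive I ∧ ∃ u₁ u₂ : ℝ, 0 < u₁ ∧ 0 < u₂ ∧
    ∀ g ∈ I, g ≠ 0 → normU σ σ' u₁ u₂ 1 ≤ normU σ σ' u₁ u₂ g

/-- The example `F = ℚ(√3)` (discriminant 12): for `f` with `σ f = (1+√3)/2` and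
`σ' f = (1-√3)/2`, the module `ℤ + ℤf` is a fractional ideal `I` of `F`, it is 1-reduced,
`N(f - 1/2) = -3/4`, and `N(I⁻¹) = 2 = √(Δ_F/3)`. -/
theorem example_disc_twelve {F : Type*} [Field F] [NumberField F]
    (hdeg : Module.finrank ℚ F = 2)
    (σ σ' : F →+* ℝ) (hσ : σ ≠ σ')
    (hΔ : discr F = 12)
    (f : F) (hσf : σ f = (1 + Real.sqrt 3) / 2) (hσ'f : σ' f = (1 - Real.sqrt 3) / 2) :
    ∃ I : FractionalIdeal (𝓞 F)⁰ F,
      (∀ x : F, x ∈ I ↔ ∃ m n : ℤ, x = (m : F) + (n : F) * f) ∧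
      IsOneReduced σ σ' I ∧
      σ (f - 1/2) * σ' (f - 1/2) = -3/4 ∧
      (FractionalIdeal.absNorm I⁻¹ : ℝ) = 2 ∧
      Real.sqrt ((discr F : ℝ) / 3) = 2 := by
  have hirr : Irrational (Real.sqrt 3) := by
    have := Nat.prime_three.irrational_sqrt
    simpa using this
  have hr3 : (Real.sqrt 3)^2 = 3 := Real.sq_sqrt (by norm_num)
  set s : F := 2*f - 1 with hs
  have hσs : σ s = Real.sqrt 3 := by
    rw [hs, map_sub, map_mul, map_one, map_ofNat, hσf]; ring
  have hσ's : σ' s = -Real.sqrt 3 := by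
    rw [hs, map_sub, map_mul, map_one, map_ofNat, hσ'f]; ring
  have hs2 : s^2 = 3 := by
    apply σ.injective
    rw [map_pow, hσs, map_ofNat, hr3]
  have hsQ : ∀ q : ℚ, (q:F) ≠ s := by
    intro q hq
    apply hirr.ne_rat q
    rw [← hσs, ← hq, map_ratCast]
  have hf2 : f^2 = f + 1/2 := by
    have h := hs2
    rw [hs] at h
    linear_combination (1/4 : F) * h
  -- ℚ-decomposition of any element of F
  have hspan : ∀ x : F, ∃ a b : ℚ, x = (a:F) + (b:F) * s := by
    have li : LinearIndependent ℚ ![(1:F), s] := by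
      rw [LinearIndependent.pair_iff' (one_ne_zero)]
      intro a ha
      exact hsQ a (by rw [← ha, Algebra.smul_def, mul_one, eq_ratCast])
    have hcard : Fintype.card (Fin 2) = Module.finrank ℚ F := by
      simp [hdeg]
    let B := basisOfLinearIndependentOfCardEqFinrank li hcard
    intro x
    have hrepr := B.sum_repr x
    rw [Fin.sum_univ_two] at hrepr
    refine ⟨B.repr x 0, B.repr x 1, ?_⟩
    have hB0 : B 0 = 1 := by
      rw [coe_basisOfLinearIndependentOfCardEqFinrank]; rfl
    have hB1 : B 1 = s := by
      rw [coe_basisOfLinearIndependentOfCardEqFinrank]; rfl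
    rw [hB0, hB1] at hrepr
    rw [Algebra.smul_def, Algebra.smul_def, mul_one, eq_ratCast, eq_ratCast] at hrepr
    exact hrepr.symm
  -- integral elements decompose over ℤ
  have hOdec : ∀ α : 𝓞 F, ∃ m n : ℤ, (α : F) = (m:F) + (n:F) * s := by
    intro α
    obtain ⟨a, b, hab⟩ := hspan (α : F)
    have hint : IsIntegral ℤ ((a:F) + (b:F)*s) := by
      rw [← hab]; exact RingOfIntegers.isIntegral_coe α
    obtain ⟨⟨m, hm⟩, ⟨n, hn⟩⟩ := quad_int_coeffs hs2 hsQ hint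
    exact ⟨m, n, by rw [hab, ← hm, ← hn]; push_cast; ring⟩
  have hsint : IsIntegral ℤ s := by
    refine ⟨Polynomial.X^2 - Polynomial.C (3:ℤ), Polynomial.monic_X_pow_sub_C _ (by norm_num), ?_⟩
    have h2 : Polynomial.eval₂ (algebraMap ℤ F) s (Polynomial.X^2 - Polynomial.C (3:ℤ)) = s^2 - (3:F) := by
      rw [← Polynomial.aeval_def]
      simp [map_intCast, map_ofNat]
    show Polynomial.eval₂ _ _ _ = 0
    rw [h2, hs2, sub_self]
  set sO : 𝓞 F := ⟨s, hsint⟩ with hsO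
  have hsOs : (sO : F) = s := rfl
  set M : Submodule (𝓞 F) F := Submodule.span (𝓞 F) {1, f} with hM
  have h1M : (1:F) ∈ M := Submodule.subset_span (by simp)
  have hfM : f ∈ M := Submodule.subset_span (by simp)
  have hmemM : ∀ x : F, x ∈ M ↔ ∃ m n : ℤ, x = (m:F) + (n:F)*f := by
    intro x
    rw [hM, Submodule.mem_span_pair]
    constructor
    · rintro ⟨α, β, hx⟩
      obtain ⟨a, b, ha⟩ := hOdec α
      obtain ⟨c, d, hc⟩ := hOdec β
      refine ⟨a - b + d, 2*b + c + d, ?_⟩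
      rw [← hx, Algebra.smul_def, Algebra.smul_def,
        ← RingOfIntegers.coe_eq_algebraMap, ← RingOfIntegers.coe_eq_algebraMap, ha, hc, hs]
      push_cast
      ring_nf
      linear_combination (2*(d:F)) * hf2
    · rintro ⟨m, n, hx⟩
      refine ⟨(m : 𝓞 F), (n : 𝓞 F), ?_⟩
      rw [Algebra.smul_def, Algebra.smul_def, map_intCast, map_intCast, hx]
      ring
  have hfrac : IsFractional (𝓞 F)⁰ M := by
    refine ⟨2, mem_nonZeroDivisors_of_ne_zero two_ne_zero, ?_⟩
    intro b hb
    obtain ⟨m, n, hb'⟩ := (hmemM b).mp hb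
    refine ⟨(2*m + n : ℤ) + (n : 𝓞 F) * sO, ?_⟩
    show algebraMap (𝓞 F) F ((2*m + n : ℤ) + (n : 𝓞 F) * sO) = (2:𝓞 F) • b
    rw [map_add, map_mul, map_intCast, map_intCast, Algebra.smul_def, map_ofNat,
      show algebraMap (𝓞 F) F sO = s from rfl, hb', hs]
    push_cast
    ring
  set I : FractionalIdeal (𝓞 F)⁰ F := ⟨M, hfrac⟩ with hI
  have hcoe : (I : Submodule (𝓞 F) F) = M := rfl
  refine ⟨I, ?_, ?_, ?_, ?_, ?_⟩
  · exact hmemM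
  · constructor
    · constructor
      · exact h1M
      · intro d hd hmem
        obtain ⟨m, n, hmn⟩ := (hmemM _).mp hmem
        have hd0 : (0:ℝ) < (d:ℝ) := by
          have : (2:ℝ) ≤ (d:ℝ) := by exact_mod_cast hd
          linarith
        have e1 : ((d:ℝ))⁻¹ = (m:ℝ) + (n:ℝ) * ((1+Real.sqrt 3)/2) := by
          have h := congrArg σ hmn
          rw [map_inv₀, map_natCast, map_add, map_mul, map_intCast, map_intCast, hσf] at h
          exact h
        have e2 : ((d:ℝ))⁻¹ = (m:ℝ) + (n:ℝ) * ((1-Real.sqrt 3)/2) := by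
          have h := congrArg σ' hmn
          rw [map_inv₀, map_natCast, map_add, map_mul, map_intCast, map_intCast, hσ'f] at h
          exact h
        have hr3pos : (0:ℝ) < Real.sqrt 3 := Real.sqrt_pos.mpr (by norm_num)
        have hn : (n:ℝ) * Real.sqrt 3 = 0 := by linarith
        have hn0 : n = 0 := by
          rcases mul_eq_zero.mp hn with h | h
          · exact_mod_cast h
          · exact absurd h (ne_of_gt hr3pos)
        rw [hn0] at e1
        push_cast at e1
        have hinv1 : ((d:ℝ))⁻¹ < 1 := by
          rw [inv_lt_one_iff₀]
          right
          exact_mod_cast by omega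
        have hinv0 : (0:ℝ) < ((d:ℝ))⁻¹ := by positivity
        have hm0 : (0:ℝ) < (m:ℝ) := by linarith
        have hm1 : (m:ℝ) < 1 := by linarith
        have : (0:ℤ) < m := by exact_mod_cast hm0
        have : m < 1 := by exact_mod_cast hm1
        omega
    · refine ⟨1, 1, one_pos, one_pos, ?_⟩
      intro g hg hg0
      obtain ⟨m, n, hmn⟩ := (hmemM g).mp hg
      have hmn0 : ¬(m = 0 ∧ n = 0) := by
        rintro ⟨h1, h2⟩
        apply hg0
        rw [hmn, h1, h2]
        norm_num
      have hkey := int_bound m n hmn0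
      have hkeyR : (4:ℝ) ≤ ((2*m+n : ℤ):ℝ)^2 + 3*((n:ℤ):ℝ)^2 := by exact_mod_cast hkey
      unfold normU
      apply Real.sqrt_le_sqrt
      rw [map_one, map_one]
      have hσg : σ g = (((2*m+n : ℤ):ℝ) + (n:ℝ)*Real.sqrt 3)/2 := by
        rw [hmn, map_add, map_mul, map_intCast, map_intCast, hσf]
        push_cast
        ring
      have hσ'g : σ' g = (((2*m+n : ℤ):ℝ) - (n:ℝ)*Real.sqrt 3)/2 := by
        rw [hmn, map_add, map_mul, map_intCast, map_intCast, hσ'f]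
        push_cast
        ring
      rw [hσg, hσ'g]
      push_cast at hkeyR ⊢
      nlinarith [hr3, hkeyR]
  · rw [map_sub, map_sub, hσf, hσ'f, map_div₀, map_div₀, map_one, map_one, map_ofNat, map_ofNat]
    linear_combination (-(1/4 : ℝ)) * hr3
  · have hII : I * I =
        FractionalIdeal.spanSingleton (𝓞 F)⁰ (1/2 : F) := by
      apply FractionalIdeal.coeToSubmodule_injective
      show ((I * I : FractionalIdeal (𝓞 F)⁰ F) : Submodule (𝓞 F) F) =
        ((FractionalIdeal.spanSingleton (𝓞 F)⁰ (1/2 : F) : FractionalIdeal (𝓞 F)⁰ F) :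
          Submodule (𝓞 F) F)
      rw [FractionalIdeal.coe_mul, hcoe, FractionalIdeal.coe_spanSingleton]
      apply le_antisymm
      · rw [Submodule.mul_le]
        intro x hx y hy
        obtain ⟨m, n, hx'⟩ := (hmemM x).mp hx
        obtain ⟨m', n', hy'⟩ := (hmemM y).mp hy
        rw [Submodule.mem_span_singleton]
        refine ⟨((2*m*m' + n*n' + (m*n'+n*m'+n*n') : ℤ) : 𝓞 F) +
          ((m*n'+n*m'+n*n' : ℤ) : 𝓞 F) * sO, ?_⟩
        rw [Algebra.smul_def, map_add, map_mul, map_intCast, map_intCast,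
          show algebraMap (𝓞 F) F sO = s from rfl, hx', hy', hs]
        push_cast
        linear_combination (-(n:F)*(n':F)) * hf2
      · rw [Submodule.span_le]
        intro x hx
        have hx' : x = (1/2 : F) := Set.mem_singleton_iff.mp hx
        have hff : f*f ∈ M*M := Submodule.mul_mem_mul hfM hfM
        have h1f : (1:F)*f ∈ M*M := Submodule.mul_mem_mul h1M hfM
        rw [one_mul] at h1f
        have heq : (1/2 : F) = f*f - f := by linear_combination -hf2
        show x ∈ M*M
        rw [hx', heq]
        exact sub_mem hff h1f
    have habs2 : FractionalIdeal.absNorm I = 1/2 := by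
      have hsq : FractionalIdeal.absNorm I *
          FractionalIdeal.absNorm I = 1/4 := by
        rw [← map_mul, hII, FractionalIdeal.absNorm_span_singleton,
          show (1/2 : F) = algebraMap ℚ F (1/2) by rw [eq_ratCast]; norm_num,
          Algebra.norm_algebraMap, hdeg]
        norm_num
      have hnn := FractionalIdeal.absNorm_nonneg I
      have hfac : (FractionalIdeal.absNorm I - 1/2) *
          (FractionalIdeal.absNorm I + 1/2) = 0 := by
        linear_combination hsq
      rcases mul_eq_zero.mp hfac with h | h
      · linarith
      · linarith
    rw [map_inv₀, habs2]
    norm_num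
  · rw [hΔ]
    rw [show ((12:ℤ):ℝ)/3 = 2^2 by norm_num]
    rw [Real.sqrt_sq (by norm_num)]
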